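/- The TA-SCL Markov chain converges to its stationary distribution regardless of the initial distribution: the matrix powers P^k converge entrywise as k → ∞ to a limit matrix P_∞ all of whose rows are equal to the unique stationary distribution π of P; consequently, for every row vector λ ∈ ℝ^{S+1} with nonnegative entries summing to 1, the vectors λ·P^k converge entrywise to π as k → ∞. -/

import Mathlib

/-- Transition matrix of the TA-SCL Markov chain with parameters `βn`, `βd`
(speed gain `βn/βd`), buffer size `ζ`, and small-decoder block error rate `ε`.
States are `0, 1, …, S` where `S = βn*ζ + βn`. -/
def tasclP (βn βd ζ : ℕ) (ε : ℝ) :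
    Matrix (Fin (βn * ζ + βn + 1)) (Fin (βn * ζ + βn + 1)) ℝ :=
  fun s j =>
    if (s : ℕ) ≤ βd then
      -- idle state: goes to 0 with prob 1-ε, to βn with prob ε
      (if (j : ℕ) = 0 then 1 - ε else 0) + (if (j : ℕ) = βn then ε else 0)
    else if (s : ℕ) ≤ βn * ζ + βd then
      -- safe state: goes to s-βd with prob 1-ε, to s+βn-βd with prob ε
      (if (j : ℕ) = (s : ℕ) - βd then 1 - ε else 0) +
        (if (j : ℕ) = (s : ℕ) + βn - βd then ε else 0)
    else
      -- hazard state: goes to s-βd with prob 1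
      if (j : ℕ) = (s : ℕ) - βd then 1 else 0

open Matrix Finset Filter

namespace TasclAux

variable {n : ℕ}

lemma vecMul_apply (v : Fin n → ℝ) (M : Matrix (Fin n) (Fin n) ℝ) (j : Fin n) :
    Matrix.vecMul v M j = ∑ i, v i * M i j := by
  simp [Matrix.vecMul, dotProduct]

/-- total-variation-style bound: if `R` is entrywise nonneg with row sums `≤ c`, then
`‖v R‖₁ ≤ c ‖v‖₁`. -/
lemma tv_vecMul_le (v : Fin n → ℝ) (R : Matrix (Fin n) (Fin n) ℝ) (c : ℝ)
    (h0 : ∀ i j, 0 ≤ R i j) (h1 : ∀ i, ∑ j, R i j ≤ c) :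
    ∑ j, |Matrix.vecMul v R j| ≤ c * ∑ i, |v i| := by
  have step : ∀ j, |Matrix.vecMul v R j| ≤ ∑ i, |v i| * R i j := by
    intro j
    rw [vecMul_apply]
    refine (Finset.abs_sum_le_sum_abs _ _).trans ?_
    refine Finset.sum_le_sum fun i _ => ?_
    rw [abs_mul, abs_of_nonneg (h0 i j)]
  calc ∑ j, |Matrix.vecMul v R j| ≤ ∑ j, ∑ i, |v i| * R i j := Finset.sum_le_sum fun j _ => step j
    _ = ∑ i, |v i| * ∑ j, R i j := by rw [Finset.sum_comm]; simp [Finset.mul_sum]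
    _ ≤ ∑ i, |v i| * c := Finset.sum_le_sum fun i _ => by
          exact mul_le_mul_of_nonneg_left (h1 i) (abs_nonneg _)
    _ = c * ∑ i, |v i| := by rw [← Finset.sum_mul]; ring

lemma sum_vecMul_eq (v : Fin n → ℝ) (Q : Matrix (Fin n) (Fin n) ℝ)
    (h1 : ∀ i, ∑ j, Q i j = 1) : ∑ j, Matrix.vecMul v Q j = ∑ i, v i := by
  simp only [vecMul_apply]
  rw [Finset.sum_comm]
  simp [← Finset.mul_sum, h1]

/-- Dobrushin contraction for a stochastic matrix with a positive column. -/
lemma tv_contract (c0 : Fin n) (Q : Matrix (Fin n) (Fin n) ℝ) (δ : ℝ)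
    (h0 : ∀ i j, 0 ≤ Q i j) (h1 : ∀ i, ∑ j, Q i j = 1)
    (hcol : ∀ i, δ ≤ Q i c0) (v : Fin n → ℝ) (hv : ∑ i, v i = 0) :
    ∑ j, |Matrix.vecMul v Q j| ≤ (1 - δ) * ∑ i, |v i| := by
  set R : Matrix (Fin n) (Fin n) ℝ := fun i j => Q i j - if j = c0 then δ else 0 with hR
  have hVR : ∀ j, Matrix.vecMul v Q j = Matrix.vecMul v R j := by
    intro j
    rw [vecMul_apply, vecMul_apply]
    have : ∑ i, v i * R i j = ∑ i, (v i * Q i j - v i * (if j = c0 then δ else 0)) := by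
      refine Finset.sum_congr rfl fun i _ => ?_; rw [hR]; ring
    rw [this, Finset.sum_sub_distrib, ← Finset.sum_mul, hv]
    ring
  have h0R : ∀ i j, 0 ≤ R i j := by
    intro i j; rw [hR]; dsimp only
    split
    · next h => subst h; linarith [hcol i]
    · simpa using h0 i j
  have h1R : ∀ i, ∑ j, R i j ≤ 1 - δ := by
    intro i; rw [hR]; dsimp only
    rw [Finset.sum_sub_distrib, h1 i, Finset.sum_ite_eq' univ c0 (fun _ => δ)]
    simp
  calc ∑ j, |Matrix.vecMul v Q j| = ∑ j, |Matrix.vecMul v R j| := by simp [hVR]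
    _ ≤ (1 - δ) * ∑ i, |v i| := tv_vecMul_le v R _ h0R h1R

lemma pow_nonneg_entry (A : Matrix (Fin n) (Fin n) ℝ) (h0 : ∀ i j, 0 ≤ A i j) :
    ∀ k i j, 0 ≤ (A ^ k) i j := by
  intro k
  induction k with
  | zero => intro i j; simp [Matrix.one_apply]; split <;> norm_num
  | succ k ih =>
    intro i j
    rw [pow_succ, Matrix.mul_apply]
    exact Finset.sum_nonneg fun l _ => mul_nonneg (ih i l) (h0 l j)

lemma pow_rowsum (A : Matrix (Fin n) (Fin n) ℝ) (h1 : ∀ i, ∑ j, A i j = 1) :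
    ∀ k i, ∑ j, (A ^ k) i j = 1 := by
  intro k
  induction k with
  | zero => intro i; simp [Matrix.one_apply]
  | succ k ih =>
    intro i
    simp only [pow_succ, Matrix.mul_apply]
    rw [Finset.sum_comm]
    simp [← Finset.mul_sum, h1, ih]


/-- iterated contraction for a stochastic matrix `Q` with positive column. -/
lemma tv_contract_pow (c0 : Fin n) (Q : Matrix (Fin n) (Fin n) ℝ) (δ : ℝ)
    (h0 : ∀ i j, 0 ≤ Q i j) (h1 : ∀ i, ∑ j, Q i j = 1)
    (hcol : ∀ i, δ ≤ Q i c0) :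
    ∀ (k : ℕ) (v : Fin n → ℝ), ∑ i, v i = 0 →
      ∑ j, |Matrix.vecMul v (Q ^ k) j| ≤ (1 - δ) ^ k * ∑ i, |v i| := by
  intro k
  induction k with
  | zero => intro v _; simp [Matrix.vecMul_one]
  | succ k ih =>
    intro v hv
    rw [pow_succ, ← Matrix.vecMul_vecMul]
    calc ∑ j, |Matrix.vecMul (Matrix.vecMul v (Q ^ k)) Q j|
        ≤ (1 - δ) * ∑ j, |Matrix.vecMul v (Q ^ k) j| :=
          tv_contract c0 Q δ h0 h1 hcol _ (by
            rw [sum_vecMul_eq v (Q ^ k) (pow_rowsum Q h1 k), hv])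
      _ ≤ (1 - δ) * ((1 - δ) ^ k * ∑ i, |v i|) := by
          refine mul_le_mul_of_nonneg_left (ih v hv) ?_
          have : δ ≤ Q c0 c0 := hcol c0
          have h2 : Q c0 c0 ≤ 1 := by
            have := h1 c0
            have hn : ∀ j ∈ univ, 0 ≤ Q c0 j := fun j _ => h0 c0 j
            calc Q c0 c0 ≤ ∑ j, Q c0 j := Finset.single_le_sum hn (mem_univ c0)
              _ = 1 := h1 c0
          linarith
      _ = (1 - δ) ^ (k+1) * ∑ i, |v i| := by ring

/-- geometric decay along powers of `A`, stepping `m` at a time. -/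
lemma tv_decay (A : Matrix (Fin n) (Fin n) ℝ) (h0 : ∀ i j, 0 ≤ A i j)
    (h1 : ∀ i, ∑ j, A i j = 1) (m : ℕ) (hm : 0 < m) (δ : ℝ) (hδ1 : δ ≤ 1) (c0 : Fin n)
    (hcol : ∀ i, δ ≤ (A ^ m) i c0) :
    ∀ (k : ℕ) (v : Fin n → ℝ), ∑ i, v i = 0 →
      ∑ j, |Matrix.vecMul v (A ^ k) j| ≤ (1 - δ) ^ (k / m) * ∑ i, |v i| := by
  have weak : ∀ (k : ℕ) (v : Fin n → ℝ),
      ∑ j, |Matrix.vecMul v (A ^ k) j| ≤ ∑ i, |v i| := by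
    intro k
    induction k with
    | zero => intro v; simp [Matrix.vecMul_one]
    | succ k ih =>
      intro v
      rw [pow_succ', ← Matrix.vecMul_vecMul]
      calc ∑ j, |Matrix.vecMul (Matrix.vecMul v A) (A ^ k) j|
          ≤ ∑ j, |Matrix.vecMul v A j| := ih _
        _ ≤ 1 * ∑ i, |v i| := tv_vecMul_le v A 1 h0 (fun i => le_of_eq (h1 i))
        _ = ∑ i, |v i| := one_mul _
  intro k
  induction k using Nat.strong_induction_on with
  | _ k ih =>
    intro v hv
    by_cases hk : k < m
    · rw [Nat.div_eq_of_lt hk, pow_zero, one_mul]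
      exact weak k v
    · push_neg at hk
      have h1δ : (0:ℝ) ≤ 1 - δ := by linarith
      have hksub : k = m + (k - m) := by omega
      have hdiv : k / m = (k - m) / m + 1 := by
        conv_lhs => rw [show k = (k - m) + m by omega]
        rw [Nat.add_div_right _ hm]
      have hsplit : A ^ k = A ^ m * A ^ (k - m) := by
        conv_lhs => rw [hksub]
        rw [pow_add]
      rw [hsplit, ← Matrix.vecMul_vecMul]
      set w := Matrix.vecMul v (A ^ m) with hw
      have hws : ∑ i, w i = 0 := by
        rw [hw, sum_vecMul_eq v (A ^ m) (pow_rowsum A h1 m), hv]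
      calc ∑ j, |Matrix.vecMul w (A ^ (k - m)) j|
          ≤ (1 - δ) ^ ((k - m) / m) * ∑ i, |w i| := ih (k - m) (by omega) w hws
        _ ≤ (1 - δ) ^ ((k - m) / m) * ((1 - δ) * ∑ i, |v i|) := by
            refine mul_le_mul_of_nonneg_left ?_ (by positivity)
            exact tv_contract c0 (A ^ m) δ (pow_nonneg_entry A h0 m) (pow_rowsum A h1 m)
              hcol v hv
        _ = (1 - δ) ^ (k / m) * ∑ i, |v i| := by rw [hdiv]; ring


lemma sum_ite_val (c : ℕ) (hc : c < n) (x : ℝ) :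
    ∑ j : Fin n, (if (j : ℕ) = c then x else 0) = x := by
  have h : ∀ j : Fin n, (if (j : ℕ) = c then x else 0) = if j = ⟨c, hc⟩ then x else 0 := by
    intro j
    congr 1
    simp [Fin.ext_iff]
  simp only [h]
  rw [Finset.sum_ite_eq' univ (⟨c, hc⟩ : Fin n) (fun _ => x)]
  simp

lemma vecMul_single (c : Fin n) (M : Matrix (Fin n) (Fin n) ℝ) (j : Fin n) :
    Matrix.vecMul (fun i => if i = c then (1:ℝ) else 0) M j = M c j := by
  rw [vecMul_apply]
  rw [Finset.sum_eq_single c]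
  · simp
  · intro b _ hb; simp [hb]
  · simp

/-- Main abstract convergence theorem for a stochastic matrix satisfying a
Doeblin condition. -/
theorem stoch_conv (A : Matrix (Fin n) (Fin n) ℝ)
    (h0 : ∀ i j, 0 ≤ A i j) (h1 : ∀ i, ∑ j, A i j = 1)
    (m : ℕ) (hm : 0 < m) (δ : ℝ) (hδ0 : 0 < δ) (hδ1 : δ ≤ 1) (c0 : Fin n)
    (hcol : ∀ i, δ ≤ (A ^ m) i c0) :
    ∃ π : Fin n → ℝ,
      ((∀ i, 0 ≤ π i) ∧ (∑ i, π i = 1) ∧ Matrix.vecMul π A = π) ∧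
      (∀ π' : Fin n → ℝ, (∀ i, 0 ≤ π' i) → (∑ i, π' i = 1) →
        Matrix.vecMul π' A = π' → π' = π) ∧
      (∀ i j : Fin n,
        Filter.Tendsto (fun k : ℕ => (A ^ k) i j) Filter.atTop (nhds (π j))) ∧
      (∀ l : Fin n → ℝ, (∀ i, 0 ≤ l i) → (∑ i, l i = 1) →
        ∀ j : Fin n,
          Filter.Tendsto (fun k : ℕ => Matrix.vecMul l (A ^ k) j)
            Filter.atTop (nhds (π j))) := by
  have hr0 : (0:ℝ) ≤ 1 - δ := by linarith
  have hr1 : (1:ℝ) - δ < 1 := by linarith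
  set Q : Matrix (Fin n) (Fin n) ℝ := A ^ m with hQ
  have Q0 : ∀ i j, 0 ≤ Q i j := pow_nonneg_entry A h0 m
  have Q1 : ∀ i, ∑ j, Q i j = 1 := pow_rowsum A h1 m
  -- the sequence of rows c0 of Q^k
  set u : Fin n → ℝ := fun i => if i = c0 then (1:ℝ) else 0 with hu
  have husum : ∑ i, u i = 1 := by
    rw [hu, Finset.sum_ite_eq' univ c0 (fun _ => (1:ℝ))]; simp
  set f : ℕ → (Fin n → ℝ) := fun k => Matrix.vecMul u (Q ^ k) with hf
  have hprob : ∀ k, (∀ j, 0 ≤ f k j) ∧ (∑ j, f k j = 1) := by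
    intro k
    constructor
    · intro j
      rw [hf]; dsimp only; rw [vecMul_apply]
      refine Finset.sum_nonneg fun i _ => mul_nonneg ?_ (pow_nonneg_entry Q Q0 k i j)
      rw [hu]; dsimp only; split <;> norm_num
    · rw [hf]; dsimp only
      rw [sum_vecMul_eq u (Q ^ k) (pow_rowsum Q Q1 k), husum]
  -- Cauchy
  set w : Fin n → ℝ := Matrix.vecMul u Q - u with hwdef
  have hwsum : ∑ i, w i = 0 := by
    rw [hwdef]; simp only [Pi.sub_apply]
    rw [Finset.sum_sub_distrib, sum_vecMul_eq u Q Q1, husum]; ring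
  have hstep : ∀ k, f (k+1) - f k = Matrix.vecMul w (Q ^ k) := by
    intro k
    rw [hwdef, Matrix.sub_vecMul, Matrix.vecMul_vecMul, ← pow_succ']
  set C : ℝ := ∑ i, |w i| with hC
  have hC0 : 0 ≤ C := Finset.sum_nonneg fun i _ => abs_nonneg _
  have hdistf : ∀ k, dist (f k) (f (k+1)) ≤ C * (1 - δ) ^ k := by
    intro k
    rw [dist_pi_le_iff (by positivity)]
    intro j
    rw [Real.dist_eq]
    have h2 : |f k j - f (k+1) j| = |Matrix.vecMul w (Q ^ k) j| := by
      rw [abs_sub_comm, ← Pi.sub_apply (f (k+1)) (f k), hstep k]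
    rw [h2]
    calc |Matrix.vecMul w (Q ^ k) j| ≤ ∑ j', |Matrix.vecMul w (Q ^ k) j'| :=
          Finset.single_le_sum (f := fun j' => |Matrix.vecMul w (Q ^ k) j'|)
            (fun j' _ => abs_nonneg _) (mem_univ j)
      _ ≤ (1 - δ) ^ k * C := tv_contract_pow c0 Q δ Q0 Q1 hcol k w hwsum
      _ = C * (1 - δ) ^ k := by ring
  have hcauchy : CauchySeq f := cauchySeq_of_le_geometric (1 - δ) C hr1 hdistf
  obtain ⟨π, hπ⟩ := cauchySeq_tendsto_of_complete hcauchy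
  have htend : ∀ j, Tendsto (fun k => f k j) atTop (nhds (π j)) := by
    intro j; exact (tendsto_pi_nhds.1 hπ) j
  -- basic properties of π
  have hπ0 : ∀ j, 0 ≤ π j := fun j =>
    ge_of_tendsto' (htend j) (fun k => (hprob k).1 j)
  have hπ1 : ∑ j, π j = 1 := by
    have hs : Tendsto (fun k => ∑ j, f k j) atTop (nhds (∑ j, π j)) :=
      tendsto_finset_sum _ (fun j _ => htend j)
    have hs1 : Tendsto (fun k => ∑ j, f k j) atTop (nhds 1) := by
      simp only [fun k => (hprob k).2]; exact tendsto_const_nhds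
    exact tendsto_nhds_unique hs hs1
  -- stationarity
  have hgeom0 : Tendsto (fun k : ℕ => (1 - δ) ^ k) atTop (nhds 0) :=
    tendsto_pow_atTop_nhds_zero_of_lt_one hr0 hr1
  have hstat : Matrix.vecMul π A = π := by
    funext j
    set g : ℕ → ℝ := fun k => Matrix.vecMul (f k) A j with hg
    have claim1 : Tendsto g atTop (nhds (Matrix.vecMul π A j)) := by
      rw [vecMul_apply]
      have hgk : g = fun k => ∑ i, f k i * A i j := funext fun k => vecMul_apply _ _ _
      rw [hgk]
      exact tendsto_finset_sum _ (fun i _ => (htend i).mul tendsto_const_nhds)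
    have claim2 : Tendsto g atTop (nhds (π j)) := by
      set w' : Fin n → ℝ := Matrix.vecMul u A - u with hw'
      have hw'sum : ∑ i, w' i = 0 := by
        rw [hw']; simp only [Pi.sub_apply]
        rw [Finset.sum_sub_distrib, sum_vecMul_eq u A h1, husum]; ring
      have hcomm : ∀ k, Q ^ k * A = A * Q ^ k := by
        intro k
        rw [hQ, ← pow_mul, ← pow_succ, ← pow_succ']
      have hgf : ∀ k, g k - f k j = Matrix.vecMul w' (Q ^ k) j := by
        intro k
        rw [hw', Matrix.sub_vecMul]
        have : g k = Matrix.vecMul (Matrix.vecMul u A) (Q ^ k) j := by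
          rw [hg, Matrix.vecMul_vecMul, ← hcomm k, ← Matrix.vecMul_vecMul]
        rw [this, hf]
        simp
      have hgf0 : Tendsto (fun k => g k - f k j) atTop (nhds 0) := by
        apply squeeze_zero_norm (a := fun k => (1 - δ) ^ k * ∑ i, |w' i|)
        · intro k
          rw [Real.norm_eq_abs, hgf k]
          calc |Matrix.vecMul w' (Q ^ k) j| ≤ ∑ j', |Matrix.vecMul w' (Q ^ k) j'| :=
                Finset.single_le_sum (f := fun j' => |Matrix.vecMul w' (Q ^ k) j'|)
                  (fun j' _ => abs_nonneg _) (mem_univ j)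
            _ ≤ (1 - δ) ^ k * ∑ i, |w' i| := tv_contract_pow c0 Q δ Q0 Q1 hcol k w' hw'sum
        · simpa using hgeom0.mul_const (∑ i, |w' i|)
      have : Tendsto (fun k => f k j + (g k - f k j)) atTop (nhds (π j + 0)) :=
        (htend j).add hgf0
      simpa using this
    exact tendsto_nhds_unique claim1 claim2
  have hstatpow : ∀ k, Matrix.vecMul π (A ^ k) = π := by
    intro k
    induction k with
    | zero => simp [Matrix.vecMul_one]
    | succ k ih => rw [pow_succ, ← Matrix.vecMul_vecMul, ih, hstat]
  -- master bound
  have master : ∀ (l : Fin n → ℝ), (∑ i, l i = 1) → ∀ (k : ℕ) (j : Fin n),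
      |Matrix.vecMul l (A ^ k) j - π j| ≤ (1 - δ) ^ (k / m) * ∑ i, |l i - π i| := by
    intro l hl k j
    have hsub : Matrix.vecMul l (A ^ k) j - π j = Matrix.vecMul (l - π) (A ^ k) j := by
      rw [Matrix.sub_vecMul, hstatpow k]; simp
    have hsum0 : ∑ i, (l - π) i = 0 := by
      simp only [Pi.sub_apply]
      rw [Finset.sum_sub_distrib, hl, hπ1]; ring
    rw [hsub]
    calc |Matrix.vecMul (l - π) (A ^ k) j| ≤ ∑ j', |Matrix.vecMul (l - π) (A ^ k) j'| :=
          Finset.single_le_sum (f := fun j' => |Matrix.vecMul (l - π) (A ^ k) j'|)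
            (fun j' _ => abs_nonneg _) (mem_univ j)
      _ ≤ (1 - δ) ^ (k / m) * ∑ i, |(l - π) i| := tv_decay A h0 h1 m hm δ hδ1 c0 hcol k _ hsum0
      _ = (1 - δ) ^ (k / m) * ∑ i, |l i - π i| := by simp
  have hdivtend : Tendsto (fun k : ℕ => k / m) atTop atTop := by
    apply tendsto_atTop_atTop.2
    intro b
    exact ⟨b * m, fun k hk => (Nat.le_div_iff_mul_le hm).2 hk⟩
  have hrate : ∀ c : ℝ, Tendsto (fun k : ℕ => (1 - δ) ^ (k / m) * c) atTop (nhds 0) := by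
    intro c
    have := (hgeom0.comp hdivtend).mul_const c
    simpa using this
  -- the vecMul convergence, for vectors summing to 1
  have vectend : ∀ l : Fin n → ℝ, (∑ i, l i = 1) → ∀ j,
      Tendsto (fun k : ℕ => Matrix.vecMul l (A ^ k) j) atTop (nhds (π j)) := by
    intro l hl j
    have h0' : Tendsto (fun k : ℕ => Matrix.vecMul l (A ^ k) j - π j) atTop (nhds 0) := by
      apply squeeze_zero_norm (a := fun k : ℕ => (1 - δ) ^ (k / m) * ∑ i, |l i - π i|)
      · intro k; rw [Real.norm_eq_abs]; exact master l hl k j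
      · exact hrate _
    have : Tendsto (fun k : ℕ => (Matrix.vecMul l (A ^ k) j - π j) + π j) atTop
        (nhds (0 + π j)) := h0'.add tendsto_const_nhds
    simpa using this
  refine ⟨π, ⟨hπ0, hπ1, hstat⟩, ?_, ?_, fun l _ hl j => vectend l hl j⟩
  · -- uniqueness
    intro π' _ hπ'1 hπ'stat
    have hπ'pow : ∀ k, Matrix.vecMul π' (A ^ k) = π' := by
      intro k
      induction k with
      | zero => simp [Matrix.vecMul_one]
      | succ k ih => rw [pow_succ, ← Matrix.vecMul_vecMul, ih, hπ'stat]
    funext j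
    have hb : ∀ k : ℕ, |π' j - π j| ≤ (1 - δ) ^ (k / m) * ∑ i, |π' i - π i| := by
      intro k
      have := master π' hπ'1 k j
      rwa [hπ'pow k] at this
    have : |π' j - π j| ≤ 0 := ge_of_tendsto' (hrate (∑ i, |π' i - π i|)) hb
    have := abs_nonneg (π' j - π j)
    have : |π' j - π j| = 0 := le_antisymm ‹|π' j - π j| ≤ 0› this
    have := abs_eq_zero.1 this
    linarith
  · -- entrywise convergence of powers
    intro i j
    have he : ∀ k : ℕ, (A ^ k) i j = Matrix.vecMul (fun i' => if i' = i then (1:ℝ) else 0) (A ^ k) j :=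
      fun k => (vecMul_single i (A ^ k) j).symm
    simp only [he]
    apply vectend
    rw [Finset.sum_ite_eq' univ i (fun _ => (1:ℝ))]; simp


end TasclAux

section inst
variable (βn βd ζ : ℕ) (ε : ℝ)

lemma tasclP_nonneg (hβd : 0 < βd) (hβ : βd < βn) (hε0 : 0 < ε) (hε1 : ε < 1) :
    ∀ i j, 0 ≤ tasclP βn βd ζ ε i j := by
  intro i j
  simp only [tasclP]
  split_ifs <;> simp <;> linarith

lemma tasclP_rowsum (hβd : 0 < βd) (hβ : βd < βn) (hζ : 0 < ζ) :
    ∀ i, ∑ j, tasclP βn βd ζ ε i j = 1 := by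
  intro s
  have hs := s.isLt
  simp only [tasclP]
  by_cases h1 : (s : ℕ) ≤ βd
  · rw [Finset.sum_congr rfl (fun x _ => if_pos h1), Finset.sum_add_distrib,
      TasclAux.sum_ite_val 0 (by omega) (1 - ε),
      TasclAux.sum_ite_val βn (by omega) ε]
    ring
  · rw [Finset.sum_congr rfl (fun x _ => if_neg h1)]
    by_cases h2 : (s : ℕ) ≤ βn * ζ + βd
    · rw [Finset.sum_congr rfl (fun x _ => if_pos h2), Finset.sum_add_distrib,
        TasclAux.sum_ite_val ((s : ℕ) - βd) (by omega) (1 - ε),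
        TasclAux.sum_ite_val ((s : ℕ) + βn - βd) (by omega) ε]
      ring
    · rw [Finset.sum_congr rfl (fun x _ => if_neg h2), TasclAux.sum_ite_val ((s : ℕ) - βd) (by omega) 1]

lemma tasclP_step (hβd : 0 < βd) (hβ : βd < βn) (hε0 : 0 < ε) (hε1 : ε < 1)
    (i t : Fin (βn * ζ + βn + 1)) (ht : (t : ℕ) = (i : ℕ) - βd) :
    1 - ε ≤ tasclP βn βd ζ ε i t := by
  simp only [tasclP]
  split_ifs <;> first | linarith | omega

lemma tasclP_reach (hβd : 0 < βd) (hβ : βd < βn) (hζ : 0 < ζ) (hε0 : 0 < ε) (hε1 : ε < 1) :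
    ∀ (k : ℕ) (i : Fin (βn * ζ + βn + 1)), (i : ℕ) ≤ k * βd →
      (1 - ε) ^ k ≤ (tasclP βn βd ζ ε ^ k) i 0 := by
  intro k
  induction k with
  | zero =>
    intro i hi
    have : i = 0 := by
      apply Fin.ext
      rw [Fin.val_zero]; omega
    subst this
    simp [Matrix.one_apply]
  | succ k ih =>
    intro i hi
    have hlt : (i : ℕ) - βd < βn * ζ + βn + 1 := by have := i.isLt; omega
    set t : Fin (βn * ζ + βn + 1) := ⟨(i : ℕ) - βd, hlt⟩ with htdef
    have hpow : tasclP βn βd ζ ε ^ (k + 1) = tasclP βn βd ζ ε * tasclP βn βd ζ ε ^ k :=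
      pow_succ' _ _
    rw [hpow, Matrix.mul_apply]
    have hstep : 1 - ε ≤ tasclP βn βd ζ ε i t := tasclP_step βn βd ζ ε hβd hβ hε0 hε1 i t rfl
    have hkk : (k + 1) * βd = k * βd + βd := by ring
    have hi' : (i : ℕ) ≤ k * βd + βd := by rw [hkk] at hi; exact hi
    have hih : (1 - ε) ^ k ≤ (tasclP βn βd ζ ε ^ k) t 0 := by
      apply ih
      show (i : ℕ) - βd ≤ k * βd
      omega
    have hnn : ∀ l ∈ univ, 0 ≤ tasclP βn βd ζ ε i l * (tasclP βn βd ζ ε ^ k) l 0 := by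
      intro l _
      exact mul_nonneg (tasclP_nonneg βn βd ζ ε hβd hβ hε0 hε1 i l)
        (TasclAux.pow_nonneg_entry _ (tasclP_nonneg βn βd ζ ε hβd hβ hε0 hε1) k l 0)
    calc (1 - ε) ^ (k + 1) = (1 - ε) * (1 - ε) ^ k := by ring
      _ ≤ tasclP βn βd ζ ε i t * (tasclP βn βd ζ ε ^ k) t 0 := by
          exact mul_le_mul hstep hih (pow_nonneg (by linarith) k)
            (le_trans (by linarith) hstep)
      _ ≤ ∑ l, tasclP βn βd ζ ε i l * (tasclP βn βd ζ ε ^ k) l 0 :=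
          Finset.single_le_sum
            (f := fun l => tasclP βn βd ζ ε i l * (tasclP βn βd ζ ε ^ k) l 0)
            hnn (mem_univ t)

end inst

/-- The TA-SCL Markov chain converges to its (unique) stationary distribution
regardless of the initial distribution: `P^k` converges entrywise to a matrix
all of whose rows equal `π`, and `λ ⬝ P^k → π` for every initial distribution `λ`. -/
theorem tascl_convergence (βn βd ζ : ℕ) (hβd : 0 < βd) (hβ : βd < βn)
    (hcop : Nat.Coprime βn βd) (hζ : 0 < ζ) (ε : ℝ) (hε0 : 0 < ε) (hε1 : ε < 1) :
    ∃ π : Fin (βn * ζ + βn + 1) → ℝ,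
      ((∀ i, 0 ≤ π i) ∧ (∑ i, π i = 1) ∧
        Matrix.vecMul π (tasclP βn βd ζ ε) = π) ∧
      (∀ π' : Fin (βn * ζ + βn + 1) → ℝ,
        (∀ i, 0 ≤ π' i) → (∑ i, π' i = 1) →
        Matrix.vecMul π' (tasclP βn βd ζ ε) = π' → π' = π) ∧
      (∀ i j : Fin (βn * ζ + βn + 1),
        Filter.Tendsto (fun k : ℕ => (tasclP βn βd ζ ε ^ k) i j)
          Filter.atTop (nhds (π j))) ∧
      (∀ l : Fin (βn * ζ + βn + 1) → ℝ,
        (∀ i, 0 ≤ l i) → (∑ i, l i = 1) →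
        ∀ j : Fin (βn * ζ + βn + 1),
          Filter.Tendsto (fun k : ℕ => Matrix.vecMul l (tasclP βn βd ζ ε ^ k) j)
            Filter.atTop (nhds (π j))) := by
  have h0 := tasclP_nonneg βn βd ζ ε hβd hβ hε0 hε1
  have h1 := tasclP_rowsum βn βd ζ ε hβd hβ hζ
  set m : ℕ := βn * ζ + βn with hmdef
  have hm : 0 < m := by
    have h2 : 0 < βn := by omega
    omega
  have hδ0 : (0:ℝ) < (1 - ε) ^ m := pow_pos (by linarith) m
  have hδ1 : (1 - ε) ^ m ≤ 1 := pow_le_one₀ (by linarith) (by linarith)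
  have hcol : ∀ i : Fin (βn * ζ + βn + 1),
      (1 - ε) ^ m ≤ (tasclP βn βd ζ ε ^ m) i 0 := by
    intro i
    apply tasclP_reach βn βd ζ ε hβd hβ hζ hε0 hε1 m i
    have h2 : (i : ℕ) ≤ m := by have := i.isLt; omega
    calc (i : ℕ) ≤ m := h2
      _ ≤ m * βd := Nat.le_mul_of_pos_right m hβd
  exact TasclAux.stoch_conv (tasclP βn βd ζ ε) h0 h1 m hm ((1 - ε) ^ m) hδ0 hδ1 0 hcol
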